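/- Let i ≥ 1 and j ≥ 1. For any two vertices (x,y) and (x',y') of B_s(2i,j), the graph distance between (x,y) and (x',y') in B_s(2i,j) equals max(|x − x'|, |y − y'|). -/

import Mathlib

/-- Vertices of the brick `B_s(i,j)`: points of `ℤ²` in the box with equal parities. -/
abbrev BsVerts (i j : ℤ) : Type :=
  {p : ℤ × ℤ // 0 ≤ p.1 ∧ p.1 ≤ i ∧ 0 ≤ p.2 ∧ p.2 ≤ j ∧ p.1 % 2 = p.2 % 2}

/-- Vertices of the brick `B_d(i,j)`: points of `ℤ²` in the box with different parities. -/
abbrev BdVerts (i j : ℤ) : Type :=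
  {p : ℤ × ℤ // 0 ≤ p.1 ∧ p.1 ≤ i ∧ 0 ≤ p.2 ∧ p.2 ≤ j ∧ p.1 % 2 ≠ p.2 % 2}

/-- The brick `B_s(i,j)`; edges join points at distance 1 in both coordinates. -/
def Bs (i j : ℤ) : SimpleGraph (BsVerts i j) where
  Adj u v := |u.val.1 - v.val.1| = 1 ∧ |u.val.2 - v.val.2| = 1
  symm := by
    constructor
    intro u v h
    exact ⟨by rw [abs_sub_comm]; exact h.1, by rw [abs_sub_comm]; exact h.2⟩
  loopless := by constructor; intro u h; simp at h

/-- The brick `B_d(i,j)`; edges join points at distance 1 in both coordinates. -/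
def Bd (i j : ℤ) : SimpleGraph (BdVerts i j) where
  Adj u v := |u.val.1 - v.val.1| = 1 ∧ |u.val.2 - v.val.2| = 1
  symm := by
    constructor
    intro u v h
    exact ⟨by rw [abs_sub_comm]; exact h.1, by rw [abs_sub_comm]; exact h.2⟩
  loopless := by constructor; intro u h; simp at h

lemma brick_walk_lb {a b : ℤ} {u v : BsVerts a b} (p : (Bs a b).Walk u v) :
    |u.val.1 - v.val.1| ≤ (p.length : ℤ) ∧ |u.val.2 - v.val.2| ≤ (p.length : ℤ) := by
  induction p with
  | nil => simp
  | @cons u w v h p ih =>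
    obtain ⟨h1, h2⟩ := id h
    simp only [SimpleGraph.Walk.length_cons]
    push_cast
    constructor
    · have t := abs_sub_le u.val.1 w.val.1 v.val.1
      linarith [ih.1]
    · have t := abs_sub_le u.val.2 w.val.2 v.val.2
      linarith [ih.2]

lemma brick_step (i j : ℤ) (hi : 1 ≤ i) (hj : 1 ≤ j) (u v : BsVerts (2*i) j) (d : ℤ)
    (hd : 1 ≤ d) (hne : u.val ≠ v.val)
    (hx : |u.val.1 - v.val.1| ≤ d) (hy : |u.val.2 - v.val.2| ≤ d) :
    ∃ w : BsVerts (2*i) j, (Bs (2*i) j).Adj u w ∧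
      |w.val.1 - v.val.1| ≤ d - 1 ∧ |w.val.2 - v.val.2| ≤ d - 1 := by
  obtain ⟨⟨ux, uy⟩, hu1, hu2, hu3, hu4, hu5⟩ := u
  obtain ⟨⟨vx, vy⟩, hv1, hv2, hv3, hv4, hv5⟩ := v
  simp only [Prod.mk.injEq, ne_eq, not_and] at hne hx hy ⊢
  rw [abs_le] at hx hy
  set nx : ℤ := if ux < vx then ux+1 else if vx < ux then ux-1
      else if ux+1 ≤ 2*i then ux+1 else ux-1 with hnx
  set ny : ℤ := if uy < vy then uy+1 else if vy < uy then uy-1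
      else if uy+1 ≤ j then uy+1 else uy-1 with hny
  have hxf : (nx = ux + 1 ∨ nx = ux - 1) ∧ 0 ≤ nx ∧ nx ≤ 2*i ∧
      nx - vx ≤ d - 1 ∧ -(d-1) ≤ nx - vx := by
    rw [hnx]; split_ifs <;> omega
  have hyf : (ny = uy + 1 ∨ ny = uy - 1) ∧ 0 ≤ ny ∧ ny ≤ j ∧
      ny - vy ≤ d - 1 ∧ -(d-1) ≤ ny - vy := by
    rw [hny]; split_ifs <;> omega
  refine ⟨⟨(nx, ny), hxf.2.1, hxf.2.2.1, hyf.2.1, hyf.2.2.1, by omega⟩, ⟨?_, ?_⟩, ?_, ?_⟩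
  · show |ux - nx| = 1
    rw [abs_eq (by norm_num : (0:ℤ) ≤ 1)]; omega
  · show |uy - ny| = 1
    rw [abs_eq (by norm_num : (0:ℤ) ≤ 1)]; omega
  · show |nx - vx| ≤ d - 1
    rw [abs_le]; omega
  · show |ny - vy| ≤ d - 1
    rw [abs_le]; omega

lemma brick_exists_walk (i j : ℤ) (hi : 1 ≤ i) (hj : 1 ≤ j) :
    ∀ d : ℕ, ∀ u v : BsVerts (2*i) j,
      |u.val.1 - v.val.1| ≤ (d : ℤ) → |u.val.2 - v.val.2| ≤ (d : ℤ) →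
      ∃ p : (Bs (2*i) j).Walk u v, p.length ≤ d := by
  intro d
  induction d with
  | zero =>
    intro u v hx hy
    have : u = v := by
      apply Subtype.ext
      have h1 : u.val.1 = v.val.1 := by
        have := sub_eq_zero.mp (abs_eq_zero.mp (le_antisymm hx (abs_nonneg _))); omega
      have h2 : u.val.2 = v.val.2 := by
        have := sub_eq_zero.mp (abs_eq_zero.mp (le_antisymm hy (abs_nonneg _))); omega
      exact Prod.ext h1 h2
    subst this
    exact ⟨SimpleGraph.Walk.nil, le_refl _⟩
  | succ d ih =>
    intro u v hx hy
    by_cases hcase : u.val = v.val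
    · have : u = v := Subtype.ext hcase
      subst this
      exact ⟨SimpleGraph.Walk.nil, Nat.zero_le _⟩
    · obtain ⟨w, hadj, hwx, hwy⟩ := brick_step i j hi hj u v (d+1) (by omega)
        hcase (by push_cast at hx ⊢; linarith) (by push_cast at hy ⊢; linarith)
      obtain ⟨p, hp⟩ := ih w v (by linarith) (by linarith)
      exact ⟨SimpleGraph.Walk.cons hadj p, by simp; omega⟩

/-- In `B_s(2i,j)` (`i,j ≥ 1`), the graph distance between `(x,y)` and
`(x',y')` is `max |x−x'| |y−y'|`. -/
theorem brick_dist_eq_max (i j : ℕ) (hi : 1 ≤ i) (hj : 1 ≤ j)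
    (u v : BsVerts (2 * (i : ℤ)) (j : ℤ)) :
    ((Bs (2 * (i : ℤ)) (j : ℤ)).dist u v : ℤ)
      = max |u.val.1 - v.val.1| |u.val.2 - v.val.2| := by
  set m : ℤ := max |u.val.1 - v.val.1| |u.val.2 - v.val.2| with hm
  have hm0 : 0 ≤ m := le_trans (abs_nonneg _) (le_max_left _ _)
  have hx : |u.val.1 - v.val.1| ≤ (m.toNat : ℤ) := by
    rw [Int.toNat_of_nonneg hm0]; exact le_max_left _ _
  have hy : |u.val.2 - v.val.2| ≤ (m.toNat : ℤ) := by
    rw [Int.toNat_of_nonneg hm0]; exact le_max_right _ _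
  obtain ⟨p, hp⟩ := brick_exists_walk i j (by exact_mod_cast hi) (by exact_mod_cast hj)
    m.toNat u v hx hy
  have hub : (Bs (2*(i:ℤ)) (j:ℤ)).dist u v ≤ m.toNat :=
    le_trans (SimpleGraph.dist_le p) hp
  have hreach : (Bs (2*(i:ℤ)) (j:ℤ)).Reachable u v := ⟨p⟩
  obtain ⟨q, hq⟩ := hreach.exists_walk_length_eq_dist
  have hlb := brick_walk_lb q
  rw [hq] at hlb
  have h1 := hlb.1
  have h2 := hlb.2
  omega
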